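/- Let A be an integral Noetherian ring, a₁, ..., a_r a regular sequence in A, and fix an index i. Let R = A[X₁, ..., X̂ᵢ, ..., X_r]/J where J is generated by the elements a_j − X_j·a_i for j ≠ i (the variable Xᵢ is omitted). Then R is an integral domain. -/

import Mathlib

open MvPolynomial

section Syz
variable {R M : Type*} [CommRing R] [AddCommGroup M] [Module R M]

/-- Extract a representation from membership in `span(range g) • ⊤`. -/
lemma smul_top_extract {n : ℕ} (g : Fin n → R) (x : M)
    (hx : x ∈ (Ideal.span (Set.range g) • ⊤ : Submodule R M)) :
    ∃ u : Fin n → M, x = ∑ k, g k • u k := by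
  refine Submodule.smul_induction_on hx ?_ ?_
  · intro r hr m _
    obtain ⟨c, rfl⟩ := (Submodule.mem_span_range_iff_exists_fun R).mp hr
    refine ⟨fun k => c k • m, ?_⟩
    rw [Finset.sum_smul]
    exact Finset.sum_congr rfl fun k _ => by rw [smul_eq_mul, mul_comm, ← smul_smul]
  · rintro x y ⟨u, rfl⟩ ⟨v, rfl⟩
    exact ⟨u + v, by simp [Finset.sum_add_distrib]⟩

lemma syz : ∀ (n : ℕ) (b : Fin n → R),
    (∀ (k : Fin n) (m : M), b k • m ∈ (Ideal.span (b '' Set.Iio k) • ⊤ : Submodule R M) →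
        m ∈ (Ideal.span (b '' Set.Iio k) • ⊤ : Submodule R M)) →
    ∀ (m : Fin n → M), ∑ j, b j • m j = 0 →
    ∃ c : Fin n → Fin n → M, (∀ j k, c j k = - c k j) ∧ (∀ j, c j j = 0) ∧
      ∀ j, m j = ∑ k, b k • c j k := by
  intro n
  induction n with
  | zero => exact fun b _ m _ => ⟨fun j k => 0, by simp, by simp, fun j => j.elim0⟩
  | succ n ih =>
    intro b H m hm
    have hrange : b '' Set.Iio (Fin.last n) = Set.range (b ∘ Fin.castSucc) := by
      ext x
      constructor
      · rintro ⟨j, hj, rfl⟩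
        obtain ⟨j', rfl⟩ := Fin.exists_castSucc_eq.mpr (Fin.ne_last_of_lt hj)
        exact ⟨j', rfl⟩
      · rintro ⟨j', rfl⟩
        exact ⟨Fin.castSucc j', Fin.castSucc_lt_last j', rfl⟩
    -- the last term lies in the span of the previous ones
    have hlast : b (Fin.last n) • m (Fin.last n) ∈
        (Ideal.span (b '' Set.Iio (Fin.last n)) • ⊤ : Submodule R M) := by
      have : b (Fin.last n) • m (Fin.last n) = - ∑ j : Fin n,
          b (Fin.castSucc j) • m (Fin.castSucc j) := by
        rw [Fin.sum_univ_castSucc] at hm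
        linear_combination (norm := abel) hm
      rw [this]
      refine neg_mem (Submodule.sum_mem _ fun j _ => Submodule.smul_mem_smul ?_ trivial)
      exact Ideal.subset_span ⟨Fin.castSucc j, Fin.castSucc_lt_last j, rfl⟩
    have hm' := H (Fin.last n) _ hlast
    rw [hrange] at hm'
    obtain ⟨u, hu⟩ := smul_top_extract (b ∘ Fin.castSucc) _ hm'
    have hH' : ∀ (k : Fin n) (x : M),
        (b ∘ Fin.castSucc) k • x ∈
          (Ideal.span ((b ∘ Fin.castSucc) '' Set.Iio k) • ⊤ : Submodule R M) →
        x ∈ (Ideal.span ((b ∘ Fin.castSucc) '' Set.Iio k) • ⊤ : Submodule R M) := by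
      intro k x
      have himg : (b ∘ Fin.castSucc) '' Set.Iio k = b '' Set.Iio (Fin.castSucc k) := by
        ext y; constructor
        · rintro ⟨j, hj, rfl⟩
          exact ⟨Fin.castSucc j, by simpa using hj, rfl⟩
        · rintro ⟨j, hj, rfl⟩
          obtain ⟨j', rfl⟩ := Fin.exists_castSucc_eq.mpr
            (Fin.ne_last_of_lt (hj.trans (Fin.castSucc_lt_last k)))
          exact ⟨j', by simpa using hj, rfl⟩
      rw [himg]
      exact H (Fin.castSucc k) x
    have hsyz : ∑ j : Fin n,
        (b ∘ Fin.castSucc) j • (m (Fin.castSucc j) + b (Fin.last n) • u j) = 0 := by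
      have : ∑ j : Fin n, (b ∘ Fin.castSucc) j • (m (Fin.castSucc j) + b (Fin.last n) • u j)
          = ∑ j : Fin n, b (Fin.castSucc j) • m (Fin.castSucc j)
            + b (Fin.last n) • ∑ j : Fin n, (b ∘ Fin.castSucc) j • u j := by
        rw [Finset.smul_sum, ← Finset.sum_add_distrib]
        refine Finset.sum_congr rfl fun j _ => ?_
        rw [smul_add]
        rw [smul_comm]
        rfl
      rw [this, ← hu]
      rw [Fin.sum_univ_castSucc] at hm
      exact hm
    obtain ⟨c', hanti', hdiag', hc'⟩ := ih _ hH' _ hsyz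
    refine ⟨Fin.snoc (fun j => Fin.snoc (c' j) (- u j)) (Fin.snoc u 0), ?_, ?_, ?_⟩
    · intro j k
      induction j using Fin.lastCases with
      | last =>
        induction k using Fin.lastCases with
        | last => simp
        | cast k => simp [hanti' k]
      | cast j =>
        induction k using Fin.lastCases with
        | last => simp
        | cast k => simp [hanti' j k]
    · intro j
      induction j using Fin.lastCases with
      | last => simp
      | cast j => simp [hdiag' j]
    · intro j
      induction j using Fin.lastCases with
      | last =>
        rw [Fin.sum_univ_castSucc]
        simp [hu]
      | cast j =>
        rw [Fin.sum_univ_castSucc]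
        simp only [Fin.snoc_castSucc, Fin.snoc_last]
        have h := hc' j
        simp only [Function.comp_apply] at h
        rw [smul_neg, ← h]
        abel

lemma sum_antisym_eq_zero {ι : Type*} [Fintype ι] {N : Type*} [AddCommGroup N]
    (F : ι → ι → N) (hF : ∀ j l, F j l = - F l j) (hdiag : ∀ j, F j j = 0) :
    ∑ j, ∑ l, F j l = 0 := by
  classical
  rw [← Finset.sum_product']
  refine Finset.sum_ninvolution Prod.swap ?_ ?_ (by simp) (by simp)
  · intro p
    rw [hF p.1 p.2]
    simp
  · intro p h heq
    apply h
    have h1 : p.1 = p.2 := by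
      have := congrArg Prod.snd heq
      simpa using this
    rw [h1, hdiag]

end Syz

section Coeff

variable {A : Type*} [CommRing A] {σ : Type*}

lemma smul_top_eq_self (I : Ideal A) : (I • ⊤ : Submodule A A) = I := by
  rw [smul_eq_mul, Ideal.mul_top]

lemma mem_smul_top_iff_coeff (I : Ideal A) (p : MvPolynomial σ A) :
    p ∈ (I • ⊤ : Submodule A (MvPolynomial σ A)) ↔ ∀ d, coeff d p ∈ I := by
  constructor
  · intro hp d
    refine Submodule.smul_induction_on hp ?_ ?_
    · intro r hr q _
      rw [coeff_smul, smul_eq_mul]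
      exact I.mul_mem_right _ hr
    · intro x y hx hy
      rw [coeff_add]
      exact I.add_mem hx hy
  · intro h
    rw [← support_sum_monomial_coeff p]
    refine Submodule.sum_mem _ fun v hv => ?_
    have hmono : monomial v (coeff v p) = (coeff v p) • monomial v (1 : A) := by
      rw [smul_monomial, smul_eq_mul, mul_one]
    rw [hmono]
    exact Submodule.smul_mem_smul (h v) trivial

end Coeff

section RegA

open RingTheory.Sequence

variable {A : Type*} [CommRing A] {r : ℕ} {a : Fin r → A}

lemma take_ofFn_set_eq (k : Fin r) :
    { x | x ∈ (List.ofFn a).take k.val } = a '' Set.Iio k := by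
  ext y
  simp only [Set.mem_setOf_eq, List.mem_take_iff_getElem, List.getElem_ofFn, Set.mem_image,
    Set.mem_Iio, List.length_ofFn]
  constructor
  · rintro ⟨m, hm, rfl⟩
    exact ⟨⟨m, (lt_min_iff.mp hm).2⟩, by
      simpa [Fin.lt_def] using (lt_min_iff.mp hm).1, rfl⟩
  · rintro ⟨j, hj, rfl⟩
    exact ⟨j.val, lt_min_iff.mpr ⟨hj, j.isLt⟩, by simp⟩

lemma regA (ha : IsWeaklyRegular A (List.ofFn a)) (k : Fin r) :
    ∀ x : A, a k * x ∈ Ideal.span (a '' Set.Iio k) → x ∈ Ideal.span (a '' Set.Iio k) := by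
  intro x hx
  have hreg := ha.regular_mod_prev k.val (by simp)
  have hget : (List.ofFn a)[k.val]'(by simp) = a k := by simp
  have hIdeal : Ideal.ofList ((List.ofFn a).take k.val) = Ideal.span (a '' Set.Iio k) :=
    congrArg Ideal.span (take_ofFn_set_eq k)
  rw [hget, hIdeal] at hreg
  have h0 : a k • (Submodule.Quotient.mk x :
      A ⧸ (Ideal.span (a '' Set.Iio k) • ⊤ : Submodule A A)) = 0 := by
    rw [← Submodule.Quotient.mk_smul, Submodule.Quotient.mk_eq_zero, smul_top_eq_self,
      smul_eq_mul]
    exact hx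
  have h0' : a k • (Submodule.Quotient.mk x :
      A ⧸ (Ideal.span (a '' Set.Iio k) • ⊤ : Submodule A A)) = a k • 0 := by
    rw [smul_zero]; exact h0
  have := hreg h0'
  rwa [Submodule.Quotient.mk_eq_zero, smul_top_eq_self] at this

lemma aI_ne_zero (ha : IsRegular A (List.ofFn a)) (k : Fin r) : a k ≠ 0 := by
  intro h0
  have hreg := ha.toIsWeaklyRegular.regular_mod_prev k.val (by simp)
  have hget : (List.ofFn a)[k.val]'(by simp) = a k := by simp
  rw [hget, h0] at hreg
  have hsub : Subsingleton (A ⧸ (Ideal.ofList ((List.ofFn a).take k.val) • ⊤ :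
      Submodule A A)) := ⟨fun x y => hreg (by simp)⟩
  have htop : (Ideal.ofList ((List.ofFn a).take k.val) • ⊤ : Submodule A A) = ⊤ :=
    Submodule.Quotient.subsingleton_iff.mp hsub
  refine ha.top_ne_smul ?_
  have hle : Ideal.ofList ((List.ofFn a).take k.val) ≤ Ideal.ofList (List.ofFn a) :=
    Ideal.span_mono fun x hx => List.mem_of_mem_take hx
  have hmono := Submodule.smul_mono_left (N := (⊤ : Submodule A A)) hle
  rw [htop] at hmono
  exact (le_antisymm le_top hmono).symm

end RegA

section Main

open RingTheory.Sequence

variable {A : Type*} [CommRing A] [IsDomain A] {r : ℕ} {a : Fin r → A} {i : Fin r}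

private lemma sum_split (i : Fin r) {P : Type*} [AddCommMonoid P] (G : Fin r → P) :
    ∑ k, G k = G i + ∑ k : {j : Fin r // j ≠ i}, G k.1 := by
  classical
  rw [← Finset.sum_erase_add Finset.univ G (Finset.mem_univ i), add_comm]
  congr 1
  exact Finset.sum_subtype (Finset.univ.erase i) (fun x => by simp [Finset.mem_erase]) G

lemma L2 (ha : IsWeaklyRegular A (List.ofFn a)) (hai : a i ≠ 0)
    (g : MvPolynomial {j : Fin r // j ≠ i} A)
    (hg : C (a i) * g ∈ Ideal.span (Set.range fun j : {j : Fin r // j ≠ i} =>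
        C (a j.1) - X j * C (a i))) :
    g ∈ Ideal.span (Set.range fun j : {j : Fin r // j ≠ i} =>
        C (a j.1) - X j * C (a i)) := by
  classical
  set f : {j : Fin r // j ≠ i} → MvPolynomial {j : Fin r // j ≠ i} A :=
    fun j => C (a j.1) - X j * C (a i) with hf
  set J : Ideal (MvPolynomial {j : Fin r // j ≠ i} A) := Ideal.span (Set.range f) with hJ
  obtain ⟨h, hh⟩ := (Submodule.mem_span_range_iff_exists_fun _).mp hg
  simp only [smul_eq_mul] at hh
  -- build a syzygy of the full sequence on the polynomial ring
  set m : Fin r → MvPolynomial {j : Fin r // j ≠ i} A :=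
    fun k => if hk : k = i then -(g + ∑ j, X j * h j) else h ⟨k, hk⟩ with hm
  have key : ∑ j, (C (a j.1) * h j - C (a i) * (X j * h j)) = C (a i) * g := by
    rw [← hh]
    exact Finset.sum_congr rfl fun j _ => by rw [hf]; ring
  rw [Finset.sum_sub_distrib] at key
  have hsum : ∑ k, a k • m k = 0 := by
    simp only [smul_eq_C_mul]
    rw [sum_split i]
    have hmi : m i = -(g + ∑ j, X j * h j) := by rw [hm]; simp
    have hmj : ∀ j : {j : Fin r // j ≠ i}, m j.1 = h j := by
      intro j
      have hd : m j.1 = h ⟨j.1, j.2⟩ := by rw [hm]; exact dif_neg j.2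
      simpa using hd
    rw [hmi]
    simp only [hmj]
    rw [mul_neg, mul_add, Finset.mul_sum]
    linear_combination key
  -- H for the polynomial ring
  have H : ∀ (k : Fin r) (p : MvPolynomial {j : Fin r // j ≠ i} A),
      a k • p ∈ (Ideal.span (a '' Set.Iio k) • ⊤ :
        Submodule A (MvPolynomial {j : Fin r // j ≠ i} A)) →
      p ∈ (Ideal.span (a '' Set.Iio k) • ⊤ :
        Submodule A (MvPolynomial {j : Fin r // j ≠ i} A)) := by
    intro k p hp
    rw [mem_smul_top_iff_coeff] at hp ⊢
    intro d
    refine regA ha k _ ?_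
    have := hp d
    rwa [coeff_smul, smul_eq_mul] at this
  obtain ⟨c, hanti, hdiag, hc⟩ := syz r a H m hsum
  -- reconstruct
  have hgj : ∀ j : {j : Fin r // j ≠ i}, h j = ∑ l, C (a l) * c j.1 l := by
    intro j
    have := hc j.1
    rw [hm] at this
    simpa only [dif_neg j.2, Subtype.eta, smul_eq_C_mul] using this
  set D : {j : Fin r // j ≠ i} → {j : Fin r // j ≠ i} →
      MvPolynomial {j : Fin r // j ≠ i} A :=
    fun j l => C (a l.1) * f j - C (a i) * (X l * f j) with hD
  have hDsym : ∀ j l, D j l = D l j := by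
    intro j l
    rw [hD]
    simp only [hf]
    ring
  have hzero : ∑ j, ∑ l, c j.1 l.1 * D j l = 0 := by
    refine sum_antisym_eq_zero _ ?_ ?_
    · intro j l
      rw [hanti j.1 l.1, hDsym j l]
      ring
    · intro j
      rw [hdiag j.1]
      ring
  set W : MvPolynomial {j : Fin r // j ≠ i} A :=
    ∑ j, c j.1 i * f j + ∑ j, ∑ l, c j.1 l.1 * (X l * f j) with hW
  have main : C (a i) * g = C (a i) * W := by
    calc C (a i) * g = ∑ j, h j * f j := hh.symm
      _ = ∑ j, (∑ l, C (a l) * c j.1 l) * f j :=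
          Finset.sum_congr rfl fun j _ => by rw [hgj j]
      _ = ∑ j, (C (a i) * (c j.1 i * f j)
            + ∑ l : {j : Fin r // j ≠ i}, C (a l.1) * c j.1 l.1 * f j) := by
          refine Finset.sum_congr rfl fun j _ => ?_
          rw [Finset.sum_mul, sum_split i (fun l => C (a l) * c j.1 l * f j)]
          congr 1
          ring
      _ = C (a i) * ∑ j, c j.1 i * f j
          + ∑ j, ∑ l : {j : Fin r // j ≠ i},
              (c j.1 l.1 * D j l + C (a i) * (c j.1 l.1 * (X l * f j))) := by
          rw [Finset.sum_add_distrib, Finset.mul_sum]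
          refine congrArg (_ + ·) ?_
          refine Finset.sum_congr rfl fun j _ => Finset.sum_congr rfl fun l _ => ?_
          rw [hD]
          ring
      _ = C (a i) * W := by
          rw [hW, mul_add, Finset.mul_sum]
          simp only [Finset.sum_add_distrib]
          rw [hzero]
          simp only [Finset.mul_sum]
          ring
  have hcancel : g = W := by
    have hC : (C (a i) : MvPolynomial {j : Fin r // j ≠ i} A) ≠ 0 := by
      simpa using hai
    exact mul_left_cancel₀ hC main
  rw [hcancel, hW]
  refine J.add_mem (Ideal.sum_mem _ fun j _ => ?_) (Ideal.sum_mem _ fun j _ =>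
    Ideal.sum_mem _ fun l _ => ?_)
  · exact J.mul_mem_left _ (Ideal.subset_span ⟨j, rfl⟩)
  · rw [← mul_assoc]
    exact J.mul_mem_left _ (Ideal.subset_span ⟨j, rfl⟩)

end Main

section Final

open RingTheory.Sequence

variable {A : Type*} [CommRing A] [IsDomain A] {r : ℕ} {a : Fin r → A} {i : Fin r}

lemma L1 (K : Type*) [Field K] [Algebra A K] (hK : algebraMap A K (a i) ≠ 0)
    (p : MvPolynomial {j : Fin r // j ≠ i} A) :
    ∃ (d : ℕ) (b : A),
      (C (a i))^d * p - C b ∈ Ideal.span (Set.range fun j : {j : Fin r // j ≠ i} =>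
        C (a j.1) - X j * C (a i)) ∧
      algebraMap A K b = (algebraMap A K (a i))^d *
        aeval (fun j : {j : Fin r // j ≠ i} =>
          algebraMap A K (a j.1) * (algebraMap A K (a i))⁻¹) p := by
  induction p using MvPolynomial.induction_on with
  | C b => exact ⟨0, b, by simp, by simp⟩
  | add p q hp hq =>
    obtain ⟨d₁, b₁, hm₁, he₁⟩ := hp
    obtain ⟨d₂, b₂, hm₂, he₂⟩ := hq
    refine ⟨d₁ + d₂, a i ^ d₂ * b₁ + a i ^ d₁ * b₂, ?_, ?_⟩
    · have hmem := Ideal.add_mem _ (Ideal.mul_mem_left _ (C (a i) ^ d₂) hm₁)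
        (Ideal.mul_mem_left _ (C (a i) ^ d₁) hm₂)
      convert hmem using 1
      rw [map_add, map_mul, map_mul, map_pow, map_pow]
      ring
    · rw [map_add, map_mul, map_mul, map_pow, map_pow, he₁, he₂, map_add]
      ring
  | mul_X p j hp =>
    obtain ⟨d, b, hm, he⟩ := hp
    refine ⟨d + 1, b * a j.1, ?_, ?_⟩
    · have h1 : C (a i) ^ (d+1) * (p * X j) - C (b * a j.1)
          = (X j * C (a i)) * (C (a i) ^ d * p - C b)
            - C b * (C (a j.1) - X j * C (a i)) := by
        rw [map_mul]; ring
      rw [h1]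
      exact Ideal.sub_mem _ (Ideal.mul_mem_left _ _ hm)
        (Ideal.mul_mem_left _ _ (Ideal.subset_span ⟨j, rfl⟩))
    · rw [map_mul, he, map_mul, aeval_X]
      field_simp
      ring

end Final

theorem blowup_chart_isDomain' (A : Type*) [CommRing A] [IsDomain A] [IsNoetherianRing A]
    (r : ℕ) (a : Fin r → A) (ha : RingTheory.Sequence.IsRegular A (List.ofFn a))
    (i : Fin r) :
    IsDomain (MvPolynomial {j : Fin r // j ≠ i} A ⧸
      Ideal.span (Set.range fun j : {j : Fin r // j ≠ i} =>
        C (a j.1) - X j * C (a i))) := by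
  classical
  set J : Ideal (MvPolynomial {j : Fin r // j ≠ i} A) :=
    Ideal.span (Set.range fun j : {j : Fin r // j ≠ i} =>
      C (a j.1) - X j * C (a i)) with hJ
  have haiA : a i ≠ 0 := aI_ne_zero ha i
  set K := FractionRing A with hKdef
  have hinj : Function.Injective (algebraMap A K) := IsFractionRing.injective A K
  have hK : algebraMap A K (a i) ≠ 0 := fun h => haiA (hinj (by simpa using h))
  set φ : MvPolynomial {j : Fin r // j ≠ i} A →ₐ[A] K :=
    aeval (fun j : {j : Fin r // j ≠ i} =>
      algebraMap A K (a j.1) * (algebraMap A K (a i))⁻¹) with hφ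
  have hpow : ∀ (d : ℕ) (p : MvPolynomial {j : Fin r // j ≠ i} A),
      C (a i) ^ d * p ∈ J → p ∈ J := by
    intro d
    induction d with
    | zero => intro p hp; simpa using hp
    | succ d ih =>
      intro p hp
      rw [pow_succ', mul_assoc] at hp
      exact ih p (L2 ha.toIsWeaklyRegular haiA _ hp)
  have hJeq : J = RingHom.ker φ.toRingHom := by
    apply le_antisymm
    · rw [hJ, Ideal.span_le]
      rintro x ⟨j, rfl⟩
      simp only [SetLike.mem_coe, RingHom.mem_ker, AlgHom.toRingHom_eq_coe,
        RingHom.coe_coe, map_sub, map_mul, aeval_X, aeval_C, hφ]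
      rw [mul_assoc, inv_mul_cancel₀ hK, mul_one, sub_self]
    · intro p hp
      rw [RingHom.mem_ker] at hp
      obtain ⟨d, b, hm, he⟩ := L1 K hK p
      have hφp : φ p = 0 := hp
      rw [hφp, mul_zero] at he
      have hb : b = 0 := hinj (by simpa using he)
      rw [hb, map_zero, sub_zero] at hm
      exact hpow d p hm
  haveI : J.IsPrime := by
    rw [hJeq]
    exact RingHom.ker_isPrime _
  exact Ideal.Quotient.isDomain J


/-- Let `A` be an integral Noetherian ring, `a₁, …, a_r` a regular sequence in `A`, and
fix an index `i`. Let `R = A[X₁, …, X̂ᵢ, …, X_r]/J` where `J` is generated by the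
elements `a_j − X_j·a_i` for `j ≠ i` (the variable `Xᵢ` is omitted). Then `R` is an
integral domain. -/
theorem blowup_chart_isDomain (A : Type*) [CommRing A] [IsDomain A] [IsNoetherianRing A]
    (r : ℕ) (a : Fin r → A) (ha : RingTheory.Sequence.IsRegular A (List.ofFn a))
    (i : Fin r) :
    IsDomain (MvPolynomial {j : Fin r // j ≠ i} A ⧸
      Ideal.span (Set.range fun j : {j : Fin r // j ≠ i} =>
        C (a j.1) - X j * C (a i))) := by
  exact blowup_chart_isDomain' A r a ha i
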